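/- Let d ≥ 5. There exists a finite constant a_d depending only on d such that for every x ∈ ℝ^d, ∫_{ℝ^d} G(x,z) (|z|^{2−d} ∧ 1)^2 dz ≤ a_d (|x|^{2−d} ∧ 1). -/

import Mathlib

open MeasureTheory ENNReal NNReal

noncomputable def greenC (d : ℕ) : ℝ :=
  Real.Gamma ((d : ℝ) / 2 - 1) / (2 * Real.pi ^ ((d : ℝ) / 2))

noncomputable def green (d : ℕ) (x y : EuclideanSpace ℝ (Fin d)) : ℝ :=
  greenC d * ‖x - y‖ ^ ((2 : ℝ) - d)

section Aux
open Metric Set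

lemma ennrpow_le_rpow_of_nonpos {a b : ℝ≥0∞} {c : ℝ} (hc : c ≤ 0) (h : a ≤ b) :
    b ^ c ≤ a ^ c := by
  rw [← neg_neg c, ENNReal.rpow_neg b, ENNReal.rpow_neg a]
  exact ENNReal.inv_le_inv.mpr (ENNReal.rpow_le_rpow h (by linarith))

lemma ball_rpow_bound (d : ℕ) (hd : 3 ≤ d) :
    ∃ C : ℝ≥0∞, C ≠ ∞ ∧ ∀ (x : EuclideanSpace ℝ (Fin d)) (R : ℝ), 0 < R →
      ∫⁻ z in Metric.ball x R, (ENNReal.ofReal ‖x - z‖) ^ ((2:ℝ) - d) ≤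
        C * (ENNReal.ofReal R) ^ (2:ℝ) := by
  haveI : Nonempty (Fin d) := ⟨⟨0, by omega⟩⟩
  have hdim : Module.finrank ℝ (EuclideanSpace ℝ (Fin d)) = d := finrank_euclideanSpace_fin
  set v : ℝ≥0∞ := volume (Metric.ball (0 : EuclideanSpace ℝ (Fin d)) 1) with hv
  have hd' : (3:ℝ) ≤ (d:ℝ) := by exact_mod_cast hd
  set p : ℝ := (d:ℝ) - 2 with hp_def
  have hp : 0 < p := by simp only [hp_def]; linarith
  set q : ℝ := (d:ℝ) / p with hq_def
  have hq : 1 < q := by rw [hq_def, lt_div_iff₀ hp]; simp [hp_def]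
  have hpq : p * q = (d:ℝ) := by rw [hq_def, mul_comm]; exact div_mul_cancel₀ _ hp.ne'
  refine ⟨v * (1 + ENNReal.ofReal (1 / (q - 1))), ?_, ?_⟩
  · exact ENNReal.mul_ne_top measure_ball_lt_top.ne (by simp)
  intro x R hR
  have h2d : (2:ℝ) - d = -p := by simp only [hp_def]; ring
  set a : ℝ := R ^ (-p) with ha_def
  have ha : 0 < a := Real.rpow_pos_of_pos hR _
  have hae : ∀ᵐ z : EuclideanSpace ℝ (Fin d), z ≠ x := by
    rw [ae_iff]; simpa using measure_singleton x
  have hcongr : ∫⁻ z in Metric.ball x R, (ENNReal.ofReal ‖x - z‖) ^ ((2:ℝ) - d)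
      = ∫⁻ z in Metric.ball x R, ENNReal.ofReal (‖x - z‖ ^ (-p)) := by
    refine lintegral_congr_ae (ae_restrict_of_ae ?_)
    filter_upwards [hae] with z hz
    rw [h2d, ENNReal.ofReal_rpow_of_pos (by simpa [sub_eq_zero] using (Ne.symm hz))]
  rw [hcongr]
  rw [lintegral_eq_lintegral_meas_le _
    (ae_of_all _ fun z => Real.rpow_nonneg (norm_nonneg _) _)
    ((by fun_prop : Measurable fun z : EuclideanSpace ℝ (Fin d) => ‖x - z‖ ^ (-p)).aemeasurable)]
  have hsub : ∀ t : ℝ, 0 < t →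
      {z : EuclideanSpace ℝ (Fin d) | t ≤ ‖x - z‖ ^ (-p)} ⊆ closedBall x (t ^ (-p)⁻¹) := by
    intro t ht z hz
    simp only [mem_setOf_eq] at hz
    have hxz : 0 < ‖x - z‖ := by
      rcases eq_or_ne z x with rfl | hne
      · rw [sub_self, norm_zero, Real.zero_rpow (neg_ne_zero.mpr hp.ne')] at hz; linarith
      · simpa [sub_eq_zero] using (Ne.symm hne)
    have := (Real.le_rpow_inv_iff_of_neg hxz ht (by linarith : -p < 0)).mpr hz
    rwa [mem_closedBall, dist_comm, dist_eq_norm]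
  calc
    ∫⁻ t in Ioi 0, (volume.restrict (Metric.ball x R))
        {z : EuclideanSpace ℝ (Fin d) | t ≤ ‖x - z‖ ^ (-p)}
      = ∫⁻ t in Ioc 0 a ∪ Ioi a, (volume.restrict (Metric.ball x R))
          {z : EuclideanSpace ℝ (Fin d) | t ≤ ‖x - z‖ ^ (-p)} := by
        rw [Ioc_union_Ioi_eq_Ioi ha.le]
    _ ≤ (∫⁻ t in Ioc 0 a, (volume.restrict (Metric.ball x R))
          {z : EuclideanSpace ℝ (Fin d) | t ≤ ‖x - z‖ ^ (-p)})
        + ∫⁻ t in Ioi a, (volume.restrict (Metric.ball x R))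
          {z : EuclideanSpace ℝ (Fin d) | t ≤ ‖x - z‖ ^ (-p)} :=
      lintegral_union_le _ _ _
    _ ≤ (ENNReal.ofReal (R ^ (2:ℝ)) * v) + ENNReal.ofReal (R ^ (2:ℝ) * (1 / (q-1))) * v := by
      gcongr ?_ + ?_
      · calc
          ∫⁻ t in Ioc 0 a, (volume.restrict (Metric.ball x R))
              {z : EuclideanSpace ℝ (Fin d) | t ≤ ‖x - z‖ ^ (-p)}
            ≤ ∫⁻ _t in Ioc 0 a, volume (Metric.ball x R) := by
              refine setLIntegral_mono' measurableSet_Ioc fun t _ => ?_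
              exact (measure_mono (subset_univ _)).trans_eq (Measure.restrict_apply_univ _)
          _ = volume (Metric.ball x R) * ENNReal.ofReal a := by
              rw [setLIntegral_const, Real.volume_Ioc, sub_zero]
          _ = ENNReal.ofReal (R ^ (2:ℝ)) * v := by
              rw [Measure.addHaar_ball _ _ hR.le, hdim, mul_right_comm]
              congr 1
              rw [← ENNReal.ofReal_mul (by positivity)]
              congr 1
              rw [ha_def, ← Real.rpow_natCast R d, ← Real.rpow_add hR]
              congr 1
              rw [hp_def]; ring
      · calc
          ∫⁻ t in Ioi a, (volume.restrict (Metric.ball x R))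
              {z : EuclideanSpace ℝ (Fin d) | t ≤ ‖x - z‖ ^ (-p)}
            ≤ ∫⁻ t in Ioi a, ENNReal.ofReal (t ^ (-q)) * v := by
              refine setLIntegral_mono' measurableSet_Ioi fun t ht => ?_
              have ht' : 0 < t := lt_trans ha (mem_Ioi.mp ht)
              calc
                (volume.restrict (Metric.ball x R))
                    {z : EuclideanSpace ℝ (Fin d) | t ≤ ‖x - z‖ ^ (-p)}
                  ≤ volume (closedBall x (t ^ (-p)⁻¹)) :=
                    le_trans (Measure.restrict_le_self _) (measure_mono (hsub t ht'))
                _ = ENNReal.ofReal ((t ^ (-p)⁻¹) ^ (d:ℕ)) * v := by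
                    rw [Measure.addHaar_closedBall _ _ (by positivity), hdim]
                _ = ENNReal.ofReal (t ^ (-q)) * v := by
                    congr 2
                    rw [← Real.rpow_natCast (t ^ (-p)⁻¹) d, ← Real.rpow_mul ht'.le]
                    congr 1
                    rw [hq_def, ← div_eq_inv_mul, div_neg]
          _ = (∫⁻ t in Ioi a, ENNReal.ofReal (t ^ (-q))) * v := by
              rw [lintegral_mul_const' v _ measure_ball_lt_top.ne]
          _ = ENNReal.ofReal (R ^ (2:ℝ) * (1 / (q-1))) * v := by
              congr 1
              rw [← ofReal_integral_eq_lintegral_ofReal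
                (integrableOn_Ioi_rpow_of_lt (by linarith) ha)
                ((ae_restrict_iff' measurableSet_Ioi).mpr (ae_of_all _ fun t ht =>
                  Real.rpow_nonneg (le_of_lt (ha.trans (mem_Ioi.mp ht))) _))]
              rw [integral_Ioi_rpow_of_lt (by linarith) ha]
              have h1q : a ^ (-q + 1) = R ^ (2:ℝ) := by
                rw [ha_def, ← Real.rpow_mul hR.le]
                congr 1
                calc (-p) * (-q + 1) = p * q - p := by ring
                  _ = 2 := by rw [hpq, hp_def]; ring
              rw [h1q]
              congr 1
              rw [show (-q + 1 : ℝ) = -(q - 1) by ring, div_neg, neg_div, neg_neg, mul_one_div]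
    _ = v * (1 + ENNReal.ofReal (1 / (q - 1))) * (ENNReal.ofReal R) ^ (2:ℝ) := by
        rw [ENNReal.ofReal_mul (by positivity), ENNReal.ofReal_rpow_of_pos hR]
        ring


lemma tail_rpow_finite (d : ℕ) (hd : 1 ≤ d) {p R : ℝ} (hp : (d:ℝ) < p) (hR : 0 < R) :
    ∫⁻ z in (Metric.ball (0 : EuclideanSpace ℝ (Fin d)) R)ᶜ,
      (ENNReal.ofReal ‖z‖) ^ (-p) < ∞ := by
  haveI : Nonempty (Fin d) := ⟨⟨0, by omega⟩⟩
  have hdim : Module.finrank ℝ (EuclideanSpace ℝ (Fin d)) = d := finrank_euclideanSpace_fin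
  have hd' : (1:ℝ) ≤ (d:ℝ) := by exact_mod_cast hd
  have hp0 : 0 < p := by linarith
  set q : ℝ := (d:ℝ) / p with hq_def
  have hq0 : 0 < q := by positivity
  have hq : q < 1 := by rw [hq_def, div_lt_one hp0]; exact hp
  set v : ℝ≥0∞ := volume (Metric.ball (0 : EuclideanSpace ℝ (Fin d)) 1) with hv
  set a : ℝ := R ^ (-p) with ha_def
  have ha : 0 < a := Real.rpow_pos_of_pos hR _
  have hae : ∀ᵐ z : EuclideanSpace ℝ (Fin d), z ≠ 0 := by
    rw [ae_iff]; simpa using measure_singleton (0 : EuclideanSpace ℝ (Fin d))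
  have hcongr : ∫⁻ z in (Metric.ball (0 : EuclideanSpace ℝ (Fin d)) R)ᶜ,
        (ENNReal.ofReal ‖z‖) ^ (-p)
      = ∫⁻ z in (Metric.ball (0 : EuclideanSpace ℝ (Fin d)) R)ᶜ,
        ENNReal.ofReal (‖z‖ ^ (-p)) := by
    refine lintegral_congr_ae (ae_restrict_of_ae ?_)
    filter_upwards [hae] with z hz
    rw [ENNReal.ofReal_rpow_of_pos (norm_pos_iff.mpr hz)]
  rw [hcongr]
  rw [lintegral_eq_lintegral_meas_le _
    (ae_of_all _ fun z => Real.rpow_nonneg (norm_nonneg _) _)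
    ((by fun_prop : Measurable fun z : EuclideanSpace ℝ (Fin d) => ‖z‖ ^ (-p)).aemeasurable)]
  have hmeas : ∀ t : ℝ, MeasurableSet {z : EuclideanSpace ℝ (Fin d) | t ≤ ‖z‖ ^ (-p)} := by
    intro t
    exact measurableSet_le measurable_const (by fun_prop)
  have hsub : ∀ t : ℝ, 0 < t →
      {z : EuclideanSpace ℝ (Fin d) | t ≤ ‖z‖ ^ (-p)} ⊆ closedBall 0 (t ^ (-p)⁻¹) := by
    intro t ht z hz
    simp only [mem_setOf_eq] at hz
    have hz0 : 0 < ‖z‖ := by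
      rcases eq_or_ne z 0 with rfl | hne
      · rw [norm_zero, Real.zero_rpow (neg_ne_zero.mpr hp0.ne')] at hz; linarith
      · exact norm_pos_iff.mpr hne
    have := (Real.le_rpow_inv_iff_of_neg hz0 ht (by linarith : -p < 0)).mpr hz
    rwa [mem_closedBall, dist_zero_right]
  calc
    ∫⁻ t in Ioi 0, (volume.restrict (Metric.ball (0 : EuclideanSpace ℝ (Fin d)) R)ᶜ)
        {z : EuclideanSpace ℝ (Fin d) | t ≤ ‖z‖ ^ (-p)}
      = ∫⁻ t in Ioc 0 a ∪ Ioi a, (volume.restrict (Metric.ball (0 : EuclideanSpace ℝ (Fin d)) R)ᶜ)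
          {z : EuclideanSpace ℝ (Fin d) | t ≤ ‖z‖ ^ (-p)} := by
        rw [Ioc_union_Ioi_eq_Ioi ha.le]
    _ ≤ (∫⁻ t in Ioc 0 a, (volume.restrict (Metric.ball (0 : EuclideanSpace ℝ (Fin d)) R)ᶜ)
          {z : EuclideanSpace ℝ (Fin d) | t ≤ ‖z‖ ^ (-p)})
        + ∫⁻ t in Ioi a, (volume.restrict (Metric.ball (0 : EuclideanSpace ℝ (Fin d)) R)ᶜ)
          {z : EuclideanSpace ℝ (Fin d) | t ≤ ‖z‖ ^ (-p)} :=
      lintegral_union_le _ _ _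
    _ < ∞ := by
      rw [ENNReal.add_lt_top]
      constructor
      · calc
          ∫⁻ t in Ioc 0 a, (volume.restrict (Metric.ball (0 : EuclideanSpace ℝ (Fin d)) R)ᶜ)
              {z : EuclideanSpace ℝ (Fin d) | t ≤ ‖z‖ ^ (-p)}
            ≤ ∫⁻ t in Ioc 0 a, ENNReal.ofReal (t ^ (-q)) * v := by
              refine setLIntegral_mono' measurableSet_Ioc fun t ht => ?_
              have ht' : 0 < t := ht.1
              calc
                (volume.restrict (Metric.ball (0 : EuclideanSpace ℝ (Fin d)) R)ᶜ)
                    {z : EuclideanSpace ℝ (Fin d) | t ≤ ‖z‖ ^ (-p)}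
                  ≤ volume (closedBall (0 : EuclideanSpace ℝ (Fin d)) (t ^ (-p)⁻¹)) :=
                    le_trans (Measure.restrict_le_self _) (measure_mono (hsub t ht'))
                _ = ENNReal.ofReal ((t ^ (-p)⁻¹) ^ (d:ℕ)) * v := by
                    rw [Measure.addHaar_closedBall _ _ (by positivity), hdim]
                _ = ENNReal.ofReal (t ^ (-q)) * v := by
                    congr 2
                    rw [← Real.rpow_natCast (t ^ (-p)⁻¹) d, ← Real.rpow_mul ht'.le]
                    congr 1
                    rw [hq_def, ← div_eq_inv_mul, div_neg]
          _ = (∫⁻ t in Ioc 0 a, ENNReal.ofReal (t ^ (-q))) * v := by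
              rw [lintegral_mul_const' v _ measure_ball_lt_top.ne]
          _ < ∞ := by
              refine ENNReal.mul_lt_top ?_ measure_ball_lt_top
              refine IntegrableOn.setLIntegral_lt_top ?_
              rw [← intervalIntegrable_iff_integrableOn_Ioc_of_le ha.le]
              exact intervalIntegral.intervalIntegrable_rpow' (by linarith)
      · have hzero : ∀ t ∈ Ioi a, (volume.restrict (Metric.ball (0 : EuclideanSpace ℝ (Fin d)) R)ᶜ)
            {z : EuclideanSpace ℝ (Fin d) | t ≤ ‖z‖ ^ (-p)} = 0 := by
          intro t ht
          rw [Measure.restrict_apply (hmeas t)]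
          have hemp : {z : EuclideanSpace ℝ (Fin d) | t ≤ ‖z‖ ^ (-p)}
              ∩ (Metric.ball (0 : EuclideanSpace ℝ (Fin d)) R)ᶜ = ∅ := by
            rw [eq_empty_iff_forall_notMem]
            rintro z ⟨hz1, hz2⟩
            simp only [mem_setOf_eq] at hz1
            have hzR : R ≤ ‖z‖ := by
              have := hz2
              simp only [mem_compl_iff, mem_ball, dist_zero_right, not_lt] at this
              exact this
            have : ‖z‖ ^ (-p) ≤ a := by
              rw [ha_def]
              exact Real.rpow_le_rpow_of_nonpos hR hzR (by linarith)
            have := mem_Ioi.mp ht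
            linarith
          rw [hemp, measure_empty]
        rw [setLIntegral_congr_fun measurableSet_Ioi hzero]
        simp

lemma min_rpow_sq_le (x : ℝ≥0∞) (c : ℝ) :
    (min (x ^ c) 1) ^ 2 ≤ x ^ (c * 2) := by
  calc (min (x ^ c) 1) ^ 2 ≤ (x ^ c) ^ 2 := pow_le_pow_left' (min_le_left _ _) 2
    _ = x ^ (c * 2) := by rw [← ENNReal.rpow_natCast (x ^ c) 2, ← ENNReal.rpow_mul]; norm_num

lemma F_lintegral_finite (d : ℕ) (hd : 5 ≤ d) :
    ∫⁻ z : EuclideanSpace ℝ (Fin d),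
      (min ((ENNReal.ofReal ‖z‖) ^ ((2:ℝ) - d)) 1) ^ 2 < ∞ := by
  have hd' : (5:ℝ) ≤ (d:ℝ) := by exact_mod_cast hd
  rw [← lintegral_add_compl (μ := volume)
    (fun z : EuclideanSpace ℝ (Fin d) => (min ((ENNReal.ofReal ‖z‖) ^ ((2:ℝ) - d)) 1) ^ 2)
    (measurableSet_ball (x := (0 : EuclideanSpace ℝ (Fin d))) (ε := (1:ℝ)))]
  rw [ENNReal.add_lt_top]
  constructor
  · calc
      ∫⁻ z in Metric.ball (0 : EuclideanSpace ℝ (Fin d)) 1,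
          (min ((ENNReal.ofReal ‖z‖) ^ ((2:ℝ) - d)) 1) ^ 2
        ≤ ∫⁻ _z in Metric.ball (0 : EuclideanSpace ℝ (Fin d)) 1, 1 :=
          setLIntegral_mono' measurableSet_ball fun z _ =>
            pow_le_one' (min_le_right _ _) 2
      _ < ∞ := by
          rw [setLIntegral_const]
          simpa using measure_ball_lt_top
  · calc
      ∫⁻ z in (Metric.ball (0 : EuclideanSpace ℝ (Fin d)) 1)ᶜ,
          (min ((ENNReal.ofReal ‖z‖) ^ ((2:ℝ) - d)) 1) ^ 2
        ≤ ∫⁻ z in (Metric.ball (0 : EuclideanSpace ℝ (Fin d)) 1)ᶜ,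
            (ENNReal.ofReal ‖z‖) ^ (-(2 * ((d:ℝ) - 2))) := by
          refine setLIntegral_mono' measurableSet_ball.compl fun z _ => ?_
          have := min_rpow_sq_le (ENNReal.ofReal ‖z‖) ((2:ℝ) - d)
          convert this using 2
          ring
      _ < ∞ := tail_rpow_finite d (by omega) (by linarith) one_pos

end Aux

open Metric Set in
/-- for `d ≥ 5`, there is a finite constant `a_d` depending only on `d`
such that `∫ G(x,z) (|z|^{2−d} ∧ 1)² dz ≤ a_d (|x|^{2−d} ∧ 1)` for every `x`. -/
theorem convolution_bound (d : ℕ) (hd : 5 ≤ d) :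
    ∃ a : ℝ≥0, ∀ x : EuclideanSpace ℝ (Fin d),
      (∫⁻ z, ENNReal.ofReal (green d x z) *
          (min ((ENNReal.ofReal ‖z‖) ^ ((2 : ℝ) - d)) 1) ^ 2)
        ≤ (a : ℝ≥0∞) * min ((ENNReal.ofReal ‖x‖) ^ ((2 : ℝ) - d)) 1 := by
  haveI : Nonempty (Fin d) := ⟨⟨0, by omega⟩⟩
  have hd' : (5:ℝ) ≤ (d:ℝ) := by exact_mod_cast hd
  have hexp : (2:ℝ) - d ≤ 0 := by linarith
  have hgC : 0 ≤ greenC d := by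
    have h1 : 0 < Real.Gamma ((d:ℝ)/2 - 1) := Real.Gamma_pos_of_pos (by linarith)
    unfold greenC
    positivity
  set cC : ℝ≥0∞ := ENNReal.ofReal (greenC d) with hcC_def
  have hcC : cC ≠ ∞ := ENNReal.ofReal_ne_top
  obtain ⟨CK, hCK, hK⟩ := ball_rpow_bound d (by omega)
  set F : EuclideanSpace ℝ (Fin d) → ℝ≥0∞ :=
    fun z => (min ((ENNReal.ofReal ‖z‖) ^ ((2:ℝ) - d)) 1) ^ 2 with hF_def
  have hJF : ∫⁻ z, F z < ∞ := F_lintegral_finite d hd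
  set T3 : ℝ≥0∞ := ∫⁻ z in (Metric.ball (0 : EuclideanSpace ℝ (Fin d)) 3)ᶜ,
      (ENNReal.ofReal ‖z‖) ^ ((3:ℝ) * (2 - (d:ℝ))) with hT3_def
  have hT3 : T3 < ∞ := by
    rw [hT3_def, show (3:ℝ) * (2 - (d:ℝ)) = -(3 * ((d:ℝ) - 2)) by ring]
    exact tail_rpow_finite d (by omega) (by linarith) (by norm_num)
  set c2 : ℝ≥0∞ := (2:ℝ≥0∞) ^ (2 * (d:ℝ) - 6) with hc2_def
  set c3 : ℝ≥0∞ := (2:ℝ≥0∞) ^ ((d:ℝ) - 2) with hc3_def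
  have hc2 : c2 ≠ ∞ := (ENNReal.rpow_lt_top_of_nonneg (by linarith) (by norm_num)).ne
  have hc3 : c3 ≠ ∞ := (ENNReal.rpow_lt_top_of_nonneg (by linarith) (by norm_num)).ne
  set cA2 : ℝ≥0∞ := ENNReal.ofReal ((3/2:ℝ) ^ ((d:ℝ) - 2)) with hcA2_def
  set A1 : ℝ≥0∞ := cC * (CK * (ENNReal.ofReal (4:ℝ)) ^ (2:ℝ)) with hA1_def
  set A2 : ℝ≥0∞ := cC * cA2 * T3 with hA2_def
  set B1 : ℝ≥0∞ := cC * CK * c2 with hB1_def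
  set B2 : ℝ≥0∞ := cC * c3 * (∫⁻ z, F z) with hB2_def
  have hCtot : A1 + A2 + (B1 + B2) ≠ ∞ := by
    have h4 : (ENNReal.ofReal (4:ℝ)) ^ (2:ℝ) ≠ ∞ :=
      (ENNReal.rpow_lt_top_of_nonneg (by norm_num) ENNReal.ofReal_ne_top).ne
    simp only [hA1_def, hA2_def, hB1_def, hB2_def, ENNReal.add_ne_top]
    exact ⟨⟨ENNReal.mul_ne_top hcC (ENNReal.mul_ne_top hCK h4),
      ENNReal.mul_ne_top (ENNReal.mul_ne_top hcC ENNReal.ofReal_ne_top) hT3.ne⟩,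
      ENNReal.mul_ne_top (ENNReal.mul_ne_top hcC hCK) hc2,
      ENNReal.mul_ne_top (ENNReal.mul_ne_top hcC hc3) hJF.ne⟩
  refine ⟨(A1 + A2 + (B1 + B2)).toNNReal, fun x => ?_⟩
  rw [ENNReal.coe_toNNReal hCtot]
  have hkey : (∫⁻ z, ENNReal.ofReal (green d x z) *
        (min ((ENNReal.ofReal ‖z‖) ^ ((2 : ℝ) - d)) 1) ^ 2)
      = ∫⁻ z, cC * (ENNReal.ofReal ‖x - z‖) ^ ((2:ℝ) - d) * F z := by
    refine lintegral_congr_ae ?_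
    have hae : ∀ᵐ z : EuclideanSpace ℝ (Fin d), z ≠ x := by
      rw [ae_iff]; simpa using measure_singleton x
    filter_upwards [hae] with z hz
    have hxz : 0 < ‖x - z‖ := by simpa [sub_eq_zero] using (Ne.symm hz)
    have : ENNReal.ofReal (green d x z) = cC * (ENNReal.ofReal ‖x - z‖) ^ ((2:ℝ) - d) := by
      simp only [green]
      rw [ENNReal.ofReal_mul hgC, ENNReal.ofReal_rpow_of_pos hxz]
    rw [this]
  rw [hkey]
  rcases le_or_gt ‖x‖ 1 with h1 | h1
  · -- case ‖x‖ ≤ 1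
    have hmin : min ((ENNReal.ofReal ‖x‖) ^ ((2:ℝ) - d)) 1 = 1 := by
      refine min_eq_right ?_
      calc (1:ℝ≥0∞) = (1:ℝ≥0∞) ^ ((2:ℝ) - d) := (ENNReal.one_rpow _).symm
        _ ≤ (ENNReal.ofReal ‖x‖) ^ ((2:ℝ) - d) :=
          ennrpow_le_rpow_of_nonpos hexp (ENNReal.ofReal_le_one.mpr h1)
    rw [hmin, mul_one]
    rw [← lintegral_add_compl
      (fun z => cC * (ENNReal.ofReal ‖x - z‖) ^ ((2:ℝ) - d) * F z)
      (measurableSet_ball (x := x) (ε := (4:ℝ)))]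
    have hp1 : (∫⁻ z in Metric.ball x 4,
        cC * (ENNReal.ofReal ‖x - z‖) ^ ((2:ℝ) - d) * F z) ≤ A1 := by
      calc
        (∫⁻ z in Metric.ball x 4, cC * (ENNReal.ofReal ‖x - z‖) ^ ((2:ℝ) - d) * F z)
          ≤ ∫⁻ z in Metric.ball x 4, cC * (ENNReal.ofReal ‖x - z‖) ^ ((2:ℝ) - d) := by
            refine setLIntegral_mono' measurableSet_ball fun z _ => ?_
            calc cC * (ENNReal.ofReal ‖x - z‖) ^ ((2:ℝ) - d) * F z
                ≤ cC * (ENNReal.ofReal ‖x - z‖) ^ ((2:ℝ) - d) * 1 :=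
                  mul_le_mul' le_rfl (pow_le_one' (min_le_right _ _) 2)
              _ = cC * (ENNReal.ofReal ‖x - z‖) ^ ((2:ℝ) - d) := mul_one _
        _ = cC * ∫⁻ z in Metric.ball x 4, (ENNReal.ofReal ‖x - z‖) ^ ((2:ℝ) - d) :=
            lintegral_const_mul' _ _ hcC
        _ ≤ cC * (CK * (ENNReal.ofReal (4:ℝ)) ^ (2:ℝ)) :=
            mul_le_mul' le_rfl (hK x 4 (by norm_num))
    have hsub34 : (Metric.ball x 4)ᶜ ⊆ (Metric.ball (0 : EuclideanSpace ℝ (Fin d)) 3)ᶜ := by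
      intro z hz
      simp only [mem_compl_iff, mem_ball, not_lt] at hz ⊢
      have h1' : ‖z - x‖ ≤ ‖z‖ + ‖x‖ := norm_sub_le _ _
      have h2' : dist z x = ‖z - x‖ := dist_eq_norm _ _
      have h3' : dist z (0 : EuclideanSpace ℝ (Fin d)) = ‖z‖ := dist_zero_right _
      rw [h3']; rw [h2'] at hz; linarith
    have hp2 : (∫⁻ z in (Metric.ball x 4)ᶜ,
        cC * (ENNReal.ofReal ‖x - z‖) ^ ((2:ℝ) - d) * F z) ≤ A2 := by
      calc
        (∫⁻ z in (Metric.ball x 4)ᶜ, cC * (ENNReal.ofReal ‖x - z‖) ^ ((2:ℝ) - d) * F z)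
          ≤ ∫⁻ z in (Metric.ball x 4)ᶜ,
              (cC * cA2) * (ENNReal.ofReal ‖z‖) ^ ((3:ℝ) * (2 - (d:ℝ))) := by
            refine setLIntegral_mono' measurableSet_ball.compl fun z hz => ?_
            have hzx : 4 ≤ ‖x - z‖ := by
              simp only [mem_compl_iff, mem_ball, not_lt] at hz
              rw [dist_eq_norm, ← norm_sub_rev] at hz
              exact hz
            have hz3 : 3 ≤ ‖z‖ := by
              have := norm_sub_le x z
              have h2' : ‖x - z‖ ≤ ‖x‖ + ‖z‖ := this
              linarith
            have h23 : (2/3) * ‖z‖ ≤ ‖x - z‖ := by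
              have := norm_sub_norm_le z x
              rw [norm_sub_rev] at this
              linarith
            have hu0 : (ENNReal.ofReal ‖z‖) ≠ 0 := (ENNReal.ofReal_pos.mpr (by linarith)).ne'
            have e1 : (ENNReal.ofReal ‖x - z‖) ^ ((2:ℝ) - d)
                ≤ cA2 * (ENNReal.ofReal ‖z‖) ^ ((2:ℝ) - d) := by
              calc (ENNReal.ofReal ‖x - z‖) ^ ((2:ℝ) - d)
                  ≤ (ENNReal.ofReal ((2/3) * ‖z‖)) ^ ((2:ℝ) - d) :=
                    ennrpow_le_rpow_of_nonpos hexp (ENNReal.ofReal_le_ofReal h23)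
                _ = (ENNReal.ofReal (2/3) * ENNReal.ofReal ‖z‖) ^ ((2:ℝ) - d) := by
                    rw [ENNReal.ofReal_mul (by norm_num)]
                _ = (ENNReal.ofReal (2/3)) ^ ((2:ℝ) - d)
                    * (ENNReal.ofReal ‖z‖) ^ ((2:ℝ) - d) :=
                    ENNReal.mul_rpow_of_ne_top ENNReal.ofReal_ne_top ENNReal.ofReal_ne_top _
                _ = cA2 * (ENNReal.ofReal ‖z‖) ^ ((2:ℝ) - d) := by
                    congr 1
                    rw [ENNReal.ofReal_rpow_of_pos (by norm_num : (0:ℝ) < 2/3)]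
                    rw [hcA2_def]
                    congr 1
                    rw [show (2/3:ℝ) = ((3/2:ℝ))⁻¹ by norm_num,
                      Real.inv_rpow (by norm_num), ← Real.rpow_neg (by norm_num)]
                    congr 1; ring
            have e2 : F z ≤ ((ENNReal.ofReal ‖z‖) ^ ((2:ℝ) - d)) ^ (2:ℕ) :=
              pow_le_pow_left' (min_le_left _ _) 2
            have e3 : (ENNReal.ofReal ‖z‖) ^ ((2:ℝ) - d)
                  * ((ENNReal.ofReal ‖z‖) ^ ((2:ℝ) - d)) ^ (2:ℕ)
                = (ENNReal.ofReal ‖z‖) ^ ((3:ℝ) * (2 - (d:ℝ))) := by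
              rw [← ENNReal.rpow_natCast ((ENNReal.ofReal ‖z‖) ^ ((2:ℝ) - d)) 2,
                ← ENNReal.rpow_mul,
                ← ENNReal.rpow_add _ _ hu0 ENNReal.ofReal_ne_top]
              congr 1
              push_cast; ring
            calc cC * (ENNReal.ofReal ‖x - z‖) ^ ((2:ℝ) - d) * F z
                ≤ cC * (cA2 * (ENNReal.ofReal ‖z‖) ^ ((2:ℝ) - d))
                  * ((ENNReal.ofReal ‖z‖) ^ ((2:ℝ) - d)) ^ (2:ℕ) :=
                  mul_le_mul' (mul_le_mul' le_rfl e1) e2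
              _ = (cC * cA2) * ((ENNReal.ofReal ‖z‖) ^ ((2:ℝ) - d)
                  * ((ENNReal.ofReal ‖z‖) ^ ((2:ℝ) - d)) ^ (2:ℕ)) := by ring
              _ = (cC * cA2) * (ENNReal.ofReal ‖z‖) ^ ((3:ℝ) * (2 - (d:ℝ))) := by rw [e3]
        _ ≤ ∫⁻ z in (Metric.ball (0 : EuclideanSpace ℝ (Fin d)) 3)ᶜ,
              (cC * cA2) * (ENNReal.ofReal ‖z‖) ^ ((3:ℝ) * (2 - (d:ℝ))) :=
            lintegral_mono_set hsub34
        _ = (cC * cA2) * T3 := by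
            rw [hT3_def]
            exact lintegral_const_mul' _ _ (ENNReal.mul_ne_top hcC ENNReal.ofReal_ne_top)
    calc
      (∫⁻ z in Metric.ball x 4, cC * (ENNReal.ofReal ‖x - z‖) ^ ((2:ℝ) - d) * F z)
        + ∫⁻ z in (Metric.ball x 4)ᶜ, cC * (ENNReal.ofReal ‖x - z‖) ^ ((2:ℝ) - d) * F z
        ≤ A1 + A2 := add_le_add hp1 hp2
      _ ≤ A1 + A2 + (B1 + B2) := le_self_add
  · -- case 1 < ‖x‖
    set u : ℝ≥0∞ := ENNReal.ofReal ‖x‖ with hu_def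
    have hu1 : 1 ≤ u := ENNReal.one_le_ofReal.mpr h1.le
    have hu0 : u ≠ 0 := by
      intro h; rw [h] at hu1; simp at hu1
    have huT : u ≠ ∞ := ENNReal.ofReal_ne_top
    have hmin : min (u ^ ((2:ℝ) - d)) 1 = u ^ ((2:ℝ) - d) := by
      refine min_eq_left (ENNReal.rpow_le_one_of_one_le_of_neg hu1 (by linarith))
    rw [hmin]
    have hr2 : (0:ℝ) < ‖x‖ / 2 := by linarith
    have hhalf : ENNReal.ofReal (‖x‖ / 2) = u * 2⁻¹ := by
      rw [div_eq_mul_inv, ENNReal.ofReal_mul (norm_nonneg x),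
        ENNReal.ofReal_inv_of_pos two_pos, ENNReal.ofReal_ofNat]
    have huhalf0 : u * 2⁻¹ ≠ 0 := by
      simp [hu0]
    have huhalfT : u * 2⁻¹ ≠ ∞ := by
      exact ENNReal.mul_ne_top huT (by simp)
    have hsplit : ∀ c : ℝ, (u * 2⁻¹) ^ c = u ^ c * (2:ℝ≥0∞) ^ (-c) := by
      intro c
      rw [ENNReal.mul_rpow_of_ne_top huT (by simp), ENNReal.inv_rpow, ← ENNReal.rpow_neg]
    rw [← lintegral_add_compl
      (fun z => cC * (ENNReal.ofReal ‖x - z‖) ^ ((2:ℝ) - d) * F z)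
      (measurableSet_ball (x := x) (ε := ‖x‖ / 2))]
    set W : ℝ≥0∞ := ((u * 2⁻¹) ^ ((2:ℝ) - d)) ^ (2:ℕ) with hW_def
    have hWle : W ≤ c3 ^ (2:ℕ) := by
      rw [hW_def]
      refine pow_le_pow_left' ?_ 2
      calc (u * 2⁻¹) ^ ((2:ℝ) - d)
          ≤ ((2:ℝ≥0∞)⁻¹) ^ ((2:ℝ) - d) := by
            refine ennrpow_le_rpow_of_nonpos hexp ?_
            calc (2:ℝ≥0∞)⁻¹ = 1 * 2⁻¹ := (one_mul _).symm
              _ ≤ u * 2⁻¹ := mul_le_mul_left hu1 _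
        _ = c3 := by
          rw [ENNReal.inv_rpow, ← ENNReal.rpow_neg, hc3_def]
          congr 1; ring
    have hWT : W ≠ ∞ := (lt_of_le_of_lt hWle (ENNReal.pow_lt_top
      (ENNReal.rpow_lt_top_of_nonneg (by linarith) (by norm_num)))).ne
    have hp1 : (∫⁻ z in Metric.ball x (‖x‖ / 2),
        cC * (ENNReal.ofReal ‖x - z‖) ^ ((2:ℝ) - d) * F z) ≤ B1 * u ^ ((2:ℝ) - d) := by
      calc
        (∫⁻ z in Metric.ball x (‖x‖ / 2), cC * (ENNReal.ofReal ‖x - z‖) ^ ((2:ℝ) - d) * F z)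
          ≤ ∫⁻ z in Metric.ball x (‖x‖ / 2),
              (cC * W) * (ENNReal.ofReal ‖x - z‖) ^ ((2:ℝ) - d) := by
            refine setLIntegral_mono' measurableSet_ball fun z hz => ?_
            have hdist : ‖x - z‖ < ‖x‖ / 2 := by
              rw [← dist_eq_norm]
              exact mem_ball'.mp hz
            have hz2 : ‖x‖ / 2 ≤ ‖z‖ := by
              have := norm_sub_norm_le x z
              linarith
            have eF : F z ≤ W := by
              calc F z ≤ ((ENNReal.ofReal ‖z‖) ^ ((2:ℝ) - d)) ^ (2:ℕ) :=
                  pow_le_pow_left' (min_le_left _ _) 2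
                _ ≤ W := by
                  rw [hW_def]
                  refine pow_le_pow_left' ?_ 2
                  refine ennrpow_le_rpow_of_nonpos hexp ?_
                  rw [← hhalf]
                  exact ENNReal.ofReal_le_ofReal hz2
            calc cC * (ENNReal.ofReal ‖x - z‖) ^ ((2:ℝ) - d) * F z
                ≤ cC * (ENNReal.ofReal ‖x - z‖) ^ ((2:ℝ) - d) * W :=
                  mul_le_mul' le_rfl eF
              _ = (cC * W) * (ENNReal.ofReal ‖x - z‖) ^ ((2:ℝ) - d) := by ring
        _ = (cC * W) * ∫⁻ z in Metric.ball x (‖x‖ / 2),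
              (ENNReal.ofReal ‖x - z‖) ^ ((2:ℝ) - d) :=
            lintegral_const_mul' _ _ (ENNReal.mul_ne_top hcC hWT)
        _ ≤ (cC * W) * (CK * (ENNReal.ofReal (‖x‖ / 2)) ^ (2:ℝ)) :=
            mul_le_mul' le_rfl (hK x (‖x‖ / 2) hr2)
        _ ≤ B1 * u ^ ((2:ℝ) - d) := by
            rw [hhalf]
            have e4 : W * (u * 2⁻¹) ^ (2:ℝ) = (u * 2⁻¹) ^ (((2:ℝ) - d) * 2 + 2) := by
              rw [hW_def, ← ENNReal.rpow_natCast ((u * 2⁻¹) ^ ((2:ℝ) - d)) 2,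
                ← ENNReal.rpow_mul, ← ENNReal.rpow_add _ _ huhalf0 huhalfT]
              norm_num
            have e5 : (u * 2⁻¹) ^ (((2:ℝ) - d) * 2 + 2) ≤ c2 * u ^ ((2:ℝ) - d) := by
              rw [hsplit]
              have e6 : u ^ (((2:ℝ) - d) * 2 + 2) ≤ u ^ ((2:ℝ) - d) :=
                ENNReal.rpow_le_rpow_of_exponent_le hu1 (by linarith)
              have e7 : (2:ℝ≥0∞) ^ (-((((2:ℝ) - d) * 2 + 2))) = c2 := by
                rw [hc2_def]; congr 1; ring
              rw [e7]
              calc u ^ (((2:ℝ) - d) * 2 + 2) * c2 ≤ u ^ ((2:ℝ) - d) * c2 :=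
                  mul_le_mul_left e6 _
                _ = c2 * u ^ ((2:ℝ) - d) := mul_comm _ _
            calc (cC * W) * (CK * (u * 2⁻¹) ^ (2:ℝ))
                = (cC * CK) * (W * (u * 2⁻¹) ^ (2:ℝ)) := by ring
              _ = (cC * CK) * (u * 2⁻¹) ^ (((2:ℝ) - d) * 2 + 2) := by rw [e4]
              _ ≤ (cC * CK) * (c2 * u ^ ((2:ℝ) - d)) := mul_le_mul' le_rfl e5
              _ = B1 * u ^ ((2:ℝ) - d) := by rw [hB1_def]; ring
    have hp2 : (∫⁻ z in (Metric.ball x (‖x‖ / 2))ᶜ,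
        cC * (ENNReal.ofReal ‖x - z‖) ^ ((2:ℝ) - d) * F z) ≤ B2 * u ^ ((2:ℝ) - d) := by
      have hNbound : ∀ z ∈ (Metric.ball x (‖x‖ / 2))ᶜ,
          (ENNReal.ofReal ‖x - z‖) ^ ((2:ℝ) - d) ≤ c3 * u ^ ((2:ℝ) - d) := by
        intro z hz
        have hfar : ‖x‖ / 2 ≤ ‖x - z‖ := by
          simp only [mem_compl_iff, mem_ball, not_lt] at hz
          rw [dist_eq_norm, ← norm_sub_rev] at hz
          exact hz
        calc (ENNReal.ofReal ‖x - z‖) ^ ((2:ℝ) - d)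
            ≤ (ENNReal.ofReal (‖x‖ / 2)) ^ ((2:ℝ) - d) :=
              ennrpow_le_rpow_of_nonpos hexp (ENNReal.ofReal_le_ofReal hfar)
          _ = u ^ ((2:ℝ) - d) * (2:ℝ≥0∞) ^ (-((2:ℝ) - d)) := by rw [hhalf, hsplit]
          _ = c3 * u ^ ((2:ℝ) - d) := by
              rw [hc3_def, show (-((2:ℝ) - d)) = (d:ℝ) - 2 by ring]
              exact mul_comm _ _
      calc
        (∫⁻ z in (Metric.ball x (‖x‖ / 2))ᶜ, cC * (ENNReal.ofReal ‖x - z‖) ^ ((2:ℝ) - d) * F z)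
          ≤ ∫⁻ z in (Metric.ball x (‖x‖ / 2))ᶜ, (cC * c3 * u ^ ((2:ℝ) - d)) * F z := by
            refine setLIntegral_mono' measurableSet_ball.compl fun z hz => ?_
            calc cC * (ENNReal.ofReal ‖x - z‖) ^ ((2:ℝ) - d) * F z
                ≤ cC * (c3 * u ^ ((2:ℝ) - d)) * F z :=
                  mul_le_mul' (mul_le_mul' le_rfl (hNbound z hz)) le_rfl
              _ = (cC * c3 * u ^ ((2:ℝ) - d)) * F z := by ring
        _ ≤ ∫⁻ z, (cC * c3 * u ^ ((2:ℝ) - d)) * F z :=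
            setLIntegral_le_lintegral _ _
        _ = (cC * c3 * u ^ ((2:ℝ) - d)) * ∫⁻ z, F z := by
            refine lintegral_const_mul' _ _ ?_
            have hucle : u ^ ((2:ℝ) - d) ≤ 1 :=
              ENNReal.rpow_le_one_of_one_le_of_neg hu1 (by linarith)
            exact ENNReal.mul_ne_top (ENNReal.mul_ne_top hcC hc3)
              (lt_of_le_of_lt hucle (by norm_num)).ne
        _ = B2 * u ^ ((2:ℝ) - d) := by rw [hB2_def]; ring
    calc
      (∫⁻ z in Metric.ball x (‖x‖ / 2), cC * (ENNReal.ofReal ‖x - z‖) ^ ((2:ℝ) - d) * F z)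
        + ∫⁻ z in (Metric.ball x (‖x‖ / 2))ᶜ, cC * (ENNReal.ofReal ‖x - z‖) ^ ((2:ℝ) - d) * F z
        ≤ B1 * u ^ ((2:ℝ) - d) + B2 * u ^ ((2:ℝ) - d) := add_le_add hp1 hp2
      _ = (B1 + B2) * u ^ ((2:ℝ) - d) := (add_mul _ _ _).symm
      _ ≤ (A1 + A2 + (B1 + B2)) * u ^ ((2:ℝ) - d) := mul_le_mul_left le_add_self _
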